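/- Let (R,m,k) be a commutative Noetherian local ring which is not a field. Then m² = 0 if and only if k is a direct summand of Ω¹(M) for every non-free finitely generated R-module M; moreover, when m² = 0, for every non-free finitely generated R-module M the first syzygy Ω¹(M) is a nonzero k-vector space. -/

import Mathlib

open IsLocalRing

universe u

/-- `k = R/m` is a direct summand of the `R`-module `M`, i.e. `M ≅ k ⊕ N` for some `N`. -/
def ResidueFieldIsSummand (R : Type u) [CommRing R] [IsLocalRing R]
    (M : Type u) [AddCommGroup M] [Module R M] : Prop :=
  ∃ p q : Submodule R M, IsCompl p q ∧ Nonempty (p ≃ₗ[R] ResidueField R)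

/-- `π : F → M` is a minimal free cover: `F` is finitely generated free, `π` is
surjective, and `ker π ⊆ m·F`. -/
def IsMinimalFreeCover (R : Type u) [CommRing R] [IsLocalRing R]
    {F M : Type u} [AddCommGroup F] [Module R F] [AddCommGroup M] [Module R M]
    (π : F →ₗ[R] M) : Prop :=
  Module.Free R F ∧ Module.Finite R F ∧ Function.Surjective π ∧
    LinearMap.ker π ≤ (maximalIdeal R) • (⊤ : Submodule R F)

/-- `IsSyzygy R n M N` means that `N` is (isomorphic to) an `n`-th syzygy `Ωⁿ(M)` of `M`,
computed from minimal free covers. -/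
def IsSyzygy (R : Type u) [CommRing R] [IsLocalRing R] :
    ℕ → ModuleCat.{u} R → ModuleCat.{u} R → Prop
  | 0, M, N => Nonempty (N ≃ₗ[R] M)
  | n + 1, M, N => ∃ (F : ModuleCat.{u} R) (π : F →ₗ[R] M),
      IsMinimalFreeCover R π ∧ IsSyzygy R n (ModuleCat.of R (LinearMap.ker π)) N

section Aux

variable {R : Type u} [CommRing R] [IsLocalRing R]

omit [IsLocalRing R] in
lemma aux_res_killed' {I : Ideal R} (r : R) (hr : r ∈ I) (w : R ⧸ I) : r • w = 0 := by
  obtain ⟨s, rfl⟩ := Ideal.Quotient.mk_surjective w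
  show r • Submodule.Quotient.mk s = 0
  rw [← Submodule.Quotient.mk_smul, Submodule.Quotient.mk_eq_zero, smul_eq_mul]
  exact Ideal.mul_mem_right s _ hr

lemma aux_res_killed (r : R) (hr : r ∈ maximalIdeal R) (w : ResidueField R) : r • w = 0 :=
  aux_res_killed' r hr w

lemma aux_span_equiv {N : Type u} [AddCommGroup N] [Module R N]
    (hkill : ∀ r ∈ maximalIdeal R, ∀ x : N, r • x = 0) {x : N} (hx : x ≠ 0) :
    Nonempty ((Submodule.span R {x} : Submodule R N) ≃ₗ[R] ResidueField R) := by
  set f := LinearMap.toSpanSingleton R N x with hf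
  have hker : LinearMap.ker f = (maximalIdeal R : Submodule R R) := by
    have h1 : LinearMap.ker f ≠ ⊤ := by
      intro h
      have : (1:R) ∈ LinearMap.ker f := h ▸ Submodule.mem_top
      rw [LinearMap.mem_ker, hf, LinearMap.toSpanSingleton_apply, one_smul] at this
      exact hx this
    have h2 : (maximalIdeal R : Submodule R R) ≤ LinearMap.ker f := fun r hr => by
      rw [LinearMap.mem_ker, hf, LinearMap.toSpanSingleton_apply]
      exact hkill r hr x
    exact ((maximalIdeal.isMaximal R).eq_of_le h1 h2).symm
  have hrange : LinearMap.range f = Submodule.span R {x} :=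
    (LinearMap.span_singleton_eq_range R N x).symm
  exact ⟨(LinearEquiv.ofEq _ _ hrange.symm).trans
    ((f.quotKerEquivRange).symm.trans (Submodule.quotEquivOfEq _ _ hker))⟩

lemma aux_compl {N : Type u} [AddCommGroup N] [Module R N] [IsNoetherian R N]
    (hkill : ∀ r ∈ maximalIdeal R, ∀ x : N, r • x = 0) {x : N} (hx : x ≠ 0) :
    ∃ q : Submodule R N, IsCompl (Submodule.span R {x}) q := by
  obtain ⟨q, hq, hqmax⟩ := (set_has_maximal_iff_noetherian).mpr ‹IsNoetherian R N›
      {q : Submodule R N | x ∉ q} ⟨⊥, by simpa using hx⟩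
  refine ⟨q, ?_, ?_⟩
  · rw [disjoint_iff]
    ext y
    simp only [Submodule.mem_inf, Submodule.mem_bot]
    constructor
    · rintro ⟨hy1, hy2⟩
      obtain ⟨r, rfl⟩ := Submodule.mem_span_singleton.mp hy1
      by_cases hr : r ∈ maximalIdeal R
      · exact hkill r hr x
      · exfalso
        have hu : IsUnit r := by
          by_contra h; exact hr ((IsLocalRing.mem_maximalIdeal r).mpr h)
        obtain ⟨u, rfl⟩ := hu
        have : x ∈ q := by
          have := q.smul_mem ((u⁻¹ : Rˣ) : R) hy2
          rwa [smul_smul, Units.inv_mul, one_smul] at this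
        exact hq this
    · rintro rfl; exact ⟨Submodule.zero_mem _, Submodule.zero_mem _⟩
  · rw [codisjoint_iff]
    by_contra h
    obtain ⟨z, -, hz⟩ := SetLike.exists_of_lt (lt_of_le_of_ne le_top h)
    have hzq : z ∉ q := fun hzq => hz (Submodule.mem_sup_right hzq)
    have hqlt : q < q ⊔ Submodule.span R {z} :=
      lt_of_le_of_ne le_sup_left (fun he => hzq (he ▸ Submodule.mem_sup_right
        (Submodule.mem_span_singleton_self z)))
    have hxmem : x ∈ q ⊔ Submodule.span R {z} := by
      by_contra hxm
      exact hqmax _ hxm hqlt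
    obtain ⟨a, ha, b, hb, hab⟩ := Submodule.mem_sup.mp hxmem
    obtain ⟨r, rfl⟩ := Submodule.mem_span_singleton.mp hb
    by_cases hr : r ∈ maximalIdeal R
    · rw [hkill r hr z, add_zero] at hab
      exact hq (hab ▸ ha)
    · have hu : IsUnit r := by
        by_contra h'; exact hr ((IsLocalRing.mem_maximalIdeal r).mpr h')
      obtain ⟨u, rfl⟩ := hu
      apply hz
      have : z = ((u⁻¹ : Rˣ) : R) • (x - a) := by
        rw [← hab]; simp [smul_smul]
      rw [this]
      refine Submodule.smul_mem _ _ (Submodule.sub_mem _ ?_ (Submodule.mem_sup_right ha))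
      exact Submodule.mem_sup_left (Submodule.mem_span_singleton_self x)

/-- A nontrivial Noetherian module killed by the maximal ideal has `k` as a summand. -/
lemma aux_summand {N : Type u} [AddCommGroup N] [Module R N] [IsNoetherian R N]
    [Nontrivial N] (hkill : ∀ r ∈ maximalIdeal R, ∀ x : N, r • x = 0) :
    ResidueFieldIsSummand R N := by
  obtain ⟨x, hx⟩ := exists_ne (0 : N)
  obtain ⟨q, hq⟩ := aux_compl hkill hx
  exact ⟨Submodule.span R {x}, q, hq, aux_span_equiv hkill hx⟩

variable [IsNoetherianRing R]

/-- The canonical syzygy of `R ⧸ J` for an ideal `J ≤ m`. -/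
lemma aux_syzygy_of_quot (J : Submodule R R) (hJ : J ≤ (maximalIdeal R : Submodule R R)) :
    IsSyzygy R 1 (ModuleCat.of R (R ⧸ J)) (ModuleCat.of R J) := by
  refine ⟨ModuleCat.of R R, J.mkQ,
    ⟨(inferInstance : Module.Free R R), (inferInstance : Module.Finite R R),
      Submodule.mkQ_surjective J, ?_⟩, ?_⟩
  · rw [Submodule.ker_mkQ]
    show J ≤ (maximalIdeal R) • (⊤ : Submodule R R)
    intro x hx
    have h1 : x • (1:R) ∈ (maximalIdeal R) • (⊤ : Submodule R R) :=
      Submodule.smul_mem_smul (hJ hx) Submodule.mem_top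
    simpa using h1
  · exact ⟨LinearEquiv.ofEq _ _ (Submodule.ker_mkQ J).symm⟩

lemma aux_quot_not_free (J : Submodule R R) (hJ : J ≤ (maximalIdeal R : Submodule R R))
    (hJ0 : J ≠ ⊥) : ¬ Module.Free R (R ⧸ J) := by
  intro hfree
  obtain ⟨x, hxJ, hx0⟩ := Submodule.exists_mem_ne_zero_of_ne_bot hJ0
  have hnt : Nontrivial (R ⧸ J) := Submodule.Quotient.nontrivial_iff.mpr (ne_of_lt
    (lt_of_le_of_lt hJ (lt_top_iff_ne_top.mpr (Ideal.IsMaximal.ne_top (maximalIdeal.isMaximal R)))))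
  have b := Module.Free.chooseBasis R (R ⧸ J)
  obtain ⟨i⟩ := b.index_nonempty
  have hkill : x • (b i) = 0 := by
    obtain ⟨s, hs⟩ := Submodule.Quotient.mk_surjective J (b i)
    rw [← hs, ← Submodule.Quotient.mk_smul, Submodule.Quotient.mk_eq_zero, smul_eq_mul]
    exact Ideal.mul_mem_right s _ hxJ
  have h2 := congrArg b.repr hkill
  rw [map_smul, map_zero] at h2
  have h3 := DFunLike.congr_fun h2 i
  rw [Finsupp.smul_apply, b.repr_self, Finsupp.single_eq_same, smul_eq_mul, mul_one] at h3
  exact hx0 h3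

/-- From `k` being a summand of an ideal `J₀`, extract a decomposition `J₀ = S' ⊕ J'`
with `S'` nonzero and killed by `m`. -/
lemma aux_extract (J₀ : Submodule R R) (h : ResidueFieldIsSummand R J₀) :
    ∃ S' J' : Submodule R R, S' ⊔ J' = J₀ ∧ S' ⊓ J' = ⊥ ∧ S' ≠ ⊥ ∧
      (∀ x ∈ S', ∀ r ∈ maximalIdeal R, r * x = 0) := by
  obtain ⟨p, q, hpq, ⟨e⟩⟩ := h
  refine ⟨p.map J₀.subtype, q.map J₀.subtype, ?_, ?_, ?_, ?_⟩
  · rw [← Submodule.map_sup, hpq.sup_eq_top, Submodule.map_subtype_top]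
  · rw [← Submodule.map_inf _ (Submodule.injective_subtype J₀), hpq.inf_eq_bot,
      Submodule.map_bot]
  · rw [Submodule.ne_bot_iff]
    refine ⟨(e.symm 1 : ↥J₀), ⟨(e.symm 1 : ↥J₀), (e.symm 1).2, rfl⟩, ?_⟩
    intro h0
    have h1 : e.symm 1 = 0 := Subtype.ext (Subtype.ext h0)
    have h2 := congrArg e h1
    rw [e.apply_symm_apply, e.map_zero] at h2
    exact one_ne_zero h2
  · rintro x ⟨y, hy, rfl⟩ r hr
    have h0 : r • (⟨y, hy⟩ : p) = 0 := by
      apply e.injective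
      rw [map_smul, e.map_zero]
      exact aux_res_killed r hr _
    have h1 : r • y = 0 := congrArg Subtype.val h0
    have h2 : r • (y : R) = 0 := congrArg Subtype.val h1
    simpa using h2

/-- The main content of the reverse direction: a syzygy of a non-free module over a ring
with `m² = 0` is nontrivial and killed by `m`. -/
lemma aux_key (hm2 : (maximalIdeal R) ^ 2 = ⊥) (M : ModuleCat.{u} R)
    (hMfree : ¬ Module.Free R M) (N : ModuleCat.{u} R) (hsyz : IsSyzygy R 1 M N) :
    (Nontrivial N ∧ ∀ r ∈ maximalIdeal R, ∀ x : N, r • x = 0) ∧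
      ResidueFieldIsSummand R N := by
  obtain ⟨F, π, ⟨hfree, hfin, hsurj, hker⟩, ⟨e⟩⟩ := hsyz
  haveI := hfree
  haveI := hfin
  -- the kernel is killed by m
  have hkillker : ∀ r ∈ maximalIdeal R, ∀ y : LinearMap.ker π, r • y = 0 := by
    intro r hr y
    have h1 : r • (y : F) ∈ (maximalIdeal R) • ((maximalIdeal R) • (⊤ : Submodule R F)) :=
      Submodule.smul_mem_smul hr (hker y.2)
    rw [← Submodule.smul_assoc, smul_eq_mul, ← pow_two, hm2, Submodule.bot_smul,
      Submodule.mem_bot] at h1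
    ext
    simpa using h1
  -- the kernel is nonzero
  have hkerne : LinearMap.ker π ≠ ⊥ := by
    intro h
    exact hMfree
      (Module.Free.of_equiv (LinearEquiv.ofBijective π ⟨LinearMap.ker_eq_bot.mp h, hsurj⟩))
  obtain ⟨y, hy0⟩ : ∃ y : LinearMap.ker π, y ≠ 0 := by
    obtain ⟨z, hz, hz0⟩ := Submodule.exists_mem_ne_zero_of_ne_bot hkerne
    exact ⟨⟨z, hz⟩, fun h => hz0 (congrArg Subtype.val h)⟩
  have hNnt : Nontrivial N := by
    refine ⟨e.symm y, 0, fun h => hy0 ?_⟩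
    have := congrArg e h
    rw [e.apply_symm_apply, e.map_zero] at this
    exact this
  have hNkill : ∀ r ∈ maximalIdeal R, ∀ x : N, r • x = 0 := by
    intro r hr x
    apply e.injective
    rw [map_smul, e.map_zero]
    exact hkillker r hr (e x)
  refine ⟨⟨hNnt, hNkill⟩, ?_⟩
  haveI : IsNoetherian R ↑(ModuleCat.of R (LinearMap.ker π)) :=
    (inferInstance : IsNoetherian R (LinearMap.ker π))
  haveI : IsNoetherian R N := isNoetherian_of_linearEquiv e.symm
  exact aux_summand hNkill

/-- The forward direction. -/
lemma aux_forward
    (hyp : ∀ M : ModuleCat.{u} R, Module.Finite R M → ¬ Module.Free R M →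
        ∀ N : ModuleCat.{u} R, IsSyzygy R 1 M N → ResidueFieldIsSummand R N) :
    (maximalIdeal R) ^ 2 = ⊥ := by
  -- take a maximal submodule S₀ of m which is killed by m and complemented in m
  obtain ⟨S₀, ⟨hS₀kill, J₀, hsup, hinf⟩, hS₀max⟩ :=
    (set_has_maximal_iff_noetherian).mpr (inferInstance : IsNoetherian R R)
      {S : Submodule R R | (∀ x ∈ S, ∀ r ∈ maximalIdeal R, r * x = 0) ∧
        ∃ J : Submodule R R, S ⊔ J = (maximalIdeal R : Submodule R R) ∧ S ⊓ J = ⊥}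
      ⟨⊥, fun x hx => by simp [(Submodule.mem_bot R).mp hx],
        ⟨maximalIdeal R, by simp, by simp⟩⟩
  have hJ₀le : J₀ ≤ (maximalIdeal R : Submodule R R) := hsup ▸ le_sup_right
  by_cases hJ₀ : J₀ = ⊥
  · -- then m = S₀ is killed by m, so m² = 0
    rw [hJ₀, sup_bot_eq] at hsup
    rw [pow_two, eq_bot_iff, Ideal.mul_le]
    intro r hr s hs
    rw [Submodule.mem_bot]
    exact hS₀kill s (hsup ▸ hs) r hr
  · -- apply the hypothesis to R ⧸ J₀ to split off another copy of k inside J₀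
    exfalso
    have hsummand : ResidueFieldIsSummand R J₀ := by
      exact hyp (ModuleCat.of R (R ⧸ J₀)) (Module.Finite.quotient R J₀)
        (aux_quot_not_free J₀ hJ₀le hJ₀) (ModuleCat.of R J₀)
        (aux_syzygy_of_quot J₀ hJ₀le)
    obtain ⟨S', J', hsup', hinf', hS'ne, hS'kill⟩ := aux_extract J₀ hsummand
    have hS'le : S' ≤ J₀ := hsup' ▸ le_sup_left
    have hJ'le : J' ≤ J₀ := hsup' ▸ le_sup_right
    -- S₀ ⊔ S' is a strictly bigger member of the set
    apply hS₀max (S₀ ⊔ S')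
    · constructor
      · intro x hx r hr
        obtain ⟨a, ha, b, hb, rfl⟩ := Submodule.mem_sup.mp hx
        rw [mul_add, hS₀kill a ha r hr, hS'kill b hb r hr, add_zero]
      · refine ⟨J', ?_, ?_⟩
        · rw [sup_assoc, hsup', hsup]
        · rw [eq_bot_iff]
          intro z hz
          obtain ⟨hz1, hz2⟩ := Submodule.mem_inf.mp hz
          obtain ⟨a, ha, b, hb, rfl⟩ := Submodule.mem_sup.mp hz1
          have haJ : a ∈ J₀ := by
            have : a = (a + b) - b := by ring
            rw [this]
            exact Submodule.sub_mem _ (hJ'le hz2) (hS'le hb)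
          have ha0 : a = 0 := by
            have : a ∈ S₀ ⊓ J₀ := Submodule.mem_inf.mpr ⟨ha, haJ⟩
            rw [hinf] at this
            exact (Submodule.mem_bot R).mp this
          rw [ha0, zero_add] at hz2 ⊢
          have : b ∈ S' ⊓ J' := Submodule.mem_inf.mpr ⟨hb, hz2⟩
          rw [hinf'] at this
          exact this
    · -- strictness
      obtain ⟨x, hxS', hx0⟩ := Submodule.exists_mem_ne_zero_of_ne_bot hS'ne
      refine lt_of_le_of_ne le_sup_left (fun he => ?_)
      have hxS₀ : x ∈ S₀ := he ▸ Submodule.mem_sup_right hxS'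
      have : x ∈ S₀ ⊓ J₀ := Submodule.mem_inf.mpr ⟨hxS₀, hS'le hxS'⟩
      rw [hinf] at this
      exact hx0 ((Submodule.mem_bot R).mp this)

end Aux

theorem stmt16 (R : Type u) [CommRing R] [IsNoetherianRing R] [IsLocalRing R]
    (hR : ¬ IsField R) :
    ((maximalIdeal R) ^ 2 = ⊥ ↔
      ∀ M : ModuleCat.{u} R, Module.Finite R M → ¬ Module.Free R M →
        ∀ N : ModuleCat.{u} R, IsSyzygy R 1 M N → ResidueFieldIsSummand R N) ∧
    ((maximalIdeal R) ^ 2 = ⊥ →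
      ∀ M : ModuleCat.{u} R, Module.Finite R M → ¬ Module.Free R M →
        ∀ N : ModuleCat.{u} R, IsSyzygy R 1 M N →
          Nontrivial N ∧ ∀ r ∈ maximalIdeal R, ∀ x : N, r • x = 0) := by
  constructor
  · constructor
    · intro hm2 M _ hMfree N hsyz
      exact (aux_key hm2 M hMfree N hsyz).2
    · exact aux_forward
  · intro hm2 M _ hMfree N hsyz
    exact (aux_key hm2 M hMfree N hsyz).1
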